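/- If X is a random variable with E X = 0, Var(X) = 1, density p, and finite entropic distance D(X) to the standard normal, then for all T ≥ 2, ∫_{|x| ≥ T} x² p(x) dx ≤ T² D(X) + 6 T e^{−T²/2}. -/

import Mathlib

open Real MeasureTheory Set

noncomputable def stdGaussianDensity (t : ℝ) : ℝ :=
  (Real.sqrt (2 * Real.pi))⁻¹ * Real.exp (-t ^ 2 / 2)

/-- Entropic distance (relative entropy) of a density `p` to the standard normal. -/
noncomputable def entDist (p : ℝ → ℝ) : ℝ :=
  ∫ x, p x * Real.log (p x / stdGaussianDensity x)

lemma sqrt2pi_pos : 0 < Real.sqrt (2 * Real.pi) :=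
  Real.sqrt_pos.2 (by positivity)

lemma phi_pos (x : ℝ) : 0 < stdGaussianDensity x :=
  mul_pos (inv_pos.2 sqrt2pi_pos) (Real.exp_pos _)

lemma phi_cont : Continuous stdGaussianDensity := by
  unfold stdGaussianDensity
  continuity

lemma aux_young {a b : ℝ} (c : ℝ) (ha : 0 ≤ a) (hb : 0 < b) :
    a * c ≤ a * Real.log (a / b) - a + b * Real.exp c := by
  rcases ha.eq_or_lt with h | h
  · simp [← h]
    positivity
  · have hu : 0 < a / b := div_pos h hb
    have key := Real.add_one_le_exp (c - Real.log (a / b))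
    rw [Real.exp_sub, Real.exp_log hu] at key
    have h2 := mul_le_mul_of_nonneg_left key h.le
    have h3 : a * (Real.exp c / (a / b)) = b * Real.exp c := by
      field_simp
    rw [h3] at h2
    nlinarith [h2]

lemma aux_lower {a b : ℝ} (ha : 0 ≤ a) (hb : 0 < b) :
    a - b ≤ a * Real.log (a / b) := by
  rcases ha.eq_or_lt with h | h
  · simp [← h, hb.le]
  · have key := Real.log_le_sub_one_of_pos (div_pos hb h)
    have hlog : Real.log (a / b) = -Real.log (b / a) := by
      rw [Real.log_div h.ne' hb.ne', Real.log_div hb.ne' h.ne']; ring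
    have h2 := mul_le_mul_of_nonneg_left key h.le
    rw [hlog]
    have h3 : a * (b / a - 1) = b - a := by field_simp
    nlinarith [h2]

lemma phi_integrable : Integrable stdGaussianDensity := by
  have h : stdGaussianDensity = fun x => (Real.sqrt (2 * Real.pi))⁻¹ * Real.exp (-(1/2) * x ^ 2) := by
    funext x; unfold stdGaussianDensity; ring_nf
  rw [h]
  exact (integrable_exp_neg_mul_sq (by norm_num)).const_mul _

lemma phi_integral : ∫ x, stdGaussianDensity x = 1 := by
  have h : stdGaussianDensity = fun x => (Real.sqrt (2 * Real.pi))⁻¹ * Real.exp (-(1/2) * x ^ 2) := by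
    funext x; unfold stdGaussianDensity; ring_nf
  rw [h, integral_const_mul, integral_gaussian]
  have : Real.pi / (1/2) = 2 * Real.pi := by ring
  rw [this, inv_mul_cancel₀ sqrt2pi_pos.ne']

lemma tail_int {b T : ℝ} (hb : 0 < b) :
    ∫ x in Ioi T, x * Real.exp (-b * x ^ 2) = Real.exp (-b * T ^ 2) / (2 * b) := by
  have hderiv : ∀ x ∈ Ici T, HasDerivAt (fun x => -Real.exp (-b * x ^ 2) / (2 * b))
      (x * Real.exp (-b * x ^ 2)) x := by
    intro x _
    have h1 : HasDerivAt (fun x : ℝ => -b * x ^ 2) (-b * (2 * x)) x := by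
      simpa using (hasDerivAt_pow 2 x).const_mul (-b)
    have h3 := (h1.exp.neg).div_const (2 * b)
    refine h3.congr_deriv ?_
    rw [div_eq_iff (by positivity : (2:ℝ) * b ≠ 0)]
    ring
  have hlim : Filter.Tendsto (fun x => -Real.exp (-b * x ^ 2) / (2 * b)) Filter.atTop (nhds 0) := by
    have h1 : Filter.Tendsto (fun x : ℝ => -b * x ^ 2) Filter.atTop Filter.atBot := by
      apply Filter.Tendsto.const_mul_atTop_of_neg (neg_neg_iff_pos.2 hb)
      exact Filter.tendsto_pow_atTop two_ne_zero
    have h2 := Real.tendsto_exp_atBot.comp h1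
    have := (h2.neg).div_const (2 * b)
    simpa using this
  rw [integral_Ioi_of_hasDerivAt_of_tendsto' hderiv
    ((integrable_mul_exp_neg_mul_sq hb).integrableOn) hlim]
  ring

lemma tail_bound {b T : ℝ} (hb : 0 < b) (hT : 0 < T) :
    ∫ x in Ioi T, Real.exp (-b * x ^ 2) ≤ Real.exp (-b * T ^ 2) / (2 * b * T) := by
  have hmono : ∫ x in Ioi T, Real.exp (-b * x ^ 2)
      ≤ ∫ x in Ioi T, (1/T) * (x * Real.exp (-b * x ^ 2)) := by
    apply setIntegral_mono_on (integrable_exp_neg_mul_sq hb).integrableOn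
      (((integrable_mul_exp_neg_mul_sq hb).const_mul (1/T)).integrableOn) measurableSet_Ioi
    intro x hx
    have hx' : T < x := hx
    have h1 : (1:ℝ) ≤ (1/T) * x := by
      rw [one_div, inv_mul_eq_div, le_div_iff₀ hT]
      linarith
    nlinarith [Real.exp_pos (-b * x ^ 2), Real.exp_pos (-b * x ^ 2)]
  rw [integral_const_mul, tail_int hb] at hmono
  calc ∫ x in Ioi T, Real.exp (-b * x ^ 2) ≤ 1/T * (Real.exp (-b * T ^ 2) / (2 * b)) := hmono
    _ = Real.exp (-b * T ^ 2) / (2 * b * T) := by field_simp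

theorem stmt_11 (p : ℝ → ℝ) (hmeas : Measurable p) (hp0 : ∀ x, 0 ≤ p x)
    (hp1 : ∫ x, p x = 1)
    (hmean : ∫ x, x * p x = 0) (hmom : Integrable (fun x => x ^ 2 * p x))
    (hvar : ∫ x, x ^ 2 * p x = 1)
    (hD : Integrable (fun x => p x * Real.log (p x / stdGaussianDensity x)))
    (T : ℝ) (hT : 2 ≤ T) :
    ∫ x in {x : ℝ | T ≤ |x|}, x ^ 2 * p x
      ≤ T ^ 2 * entDist p + 6 * T * Real.exp (-T ^ 2 / 2) := by
  have hT0 : (0:ℝ) < T := by linarith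
  set A : Set ℝ := {x : ℝ | T ≤ |x|} with hAdef
  have hA : MeasurableSet A := (isClosed_le continuous_const continuous_abs).measurableSet
  have Int_p : Integrable p := by
    by_contra h
    rw [integral_undef h] at hp1; norm_num at hp1
  have Int_phi := phi_integrable
  have hb4 : (1:ℝ)/4 ≤ 1/2 - 1/T^2 := by
    have h1 : (1:ℝ)/T^2 ≤ 1/4 := by
      apply one_div_le_one_div_of_le (by norm_num)
      nlinarith
    linarith
  set b : ℝ := 1/2 - 1/T^2 with hbdef
  have hb : (0:ℝ) < b := by rw [hbdef]; linarith
  have hfeq : (fun x => stdGaussianDensity x * Real.exp (x^2/T^2))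
      = fun x => (Real.sqrt (2*Real.pi))⁻¹ * Real.exp (-b * x^2) := by
    funext x
    unfold stdGaussianDensity
    rw [mul_assoc, ← Real.exp_add]
    congr 2
    rw [hbdef]
    field_simp
    ring
  have Int_f : Integrable (fun x => stdGaussianDensity x * Real.exp (x^2/T^2)) := by
    rw [hfeq]; exact (integrable_exp_neg_mul_sq hb).const_mul _
  -- bound on the Gaussian-type tail integral
  have hIf : ∫ x in A, stdGaussianDensity x * Real.exp (x^2/T^2)
      ≤ 6/T * Real.exp (-T^2/2) := by
    have hAsplit : A = Iic (-T) ∪ Ici T := by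
      ext x
      simp only [hAdef, mem_setOf_eq, mem_union, mem_Iic, mem_Ici, le_abs]
      constructor
      · rintro (h | h)
        exacts [Or.inr h, Or.inl (by linarith)]
      · rintro (h | h)
        exacts [Or.inr (by linarith), Or.inl h]
    rw [hfeq, hAsplit]
    have hdisj : Disjoint (Iic (-T)) (Ici T) := Iic_disjoint_Ici.2 (not_le.mpr (by linarith))
    rw [setIntegral_union hdisj measurableSet_Ici
      ((integrable_exp_neg_mul_sq hb).const_mul _).integrableOn
      ((integrable_exp_neg_mul_sq hb).const_mul _).integrableOn]
    have heven : ∫ x in Iic (-T), (Real.sqrt (2*Real.pi))⁻¹ * Real.exp (-b * x^2)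
        = ∫ x in Ioi T, (Real.sqrt (2*Real.pi))⁻¹ * Real.exp (-b * x^2) := by
      have h := integral_comp_neg_Iic (-T)
        (fun x => (Real.sqrt (2*Real.pi))⁻¹ * Real.exp (-b * x^2))
      simp only [neg_sq, neg_neg] at h
      exact h
    rw [heven, integral_Ici_eq_integral_Ioi, integral_const_mul]
    have htail := tail_bound hb hT0
    have hI0 : 0 ≤ ∫ x in Ioi T, Real.exp (-b * x^2) :=
      setIntegral_nonneg measurableSet_Ioi (fun x _ => (Real.exp_pos _).le)
    have hexp : Real.exp (-b * T^2) = Real.exp 1 * Real.exp (-T^2/2) := by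
      rw [← Real.exp_add]
      congr 1
      rw [hbdef]
      field_simp
      ring
    have hsqrt : (2.5:ℝ) ≤ Real.sqrt (2*Real.pi) := by
      have hpi := Real.pi_gt_d6
      rw [show (2.5:ℝ) = Real.sqrt (2.5^2) from (Real.sqrt_sq (by norm_num)).symm]
      apply Real.sqrt_le_sqrt
      nlinarith
    have hc : (Real.sqrt (2*Real.pi))⁻¹ ≤ 1/2.5 := by
      rw [one_div]
      exact inv_anti₀ (by norm_num) hsqrt
    have hc0 : (0:ℝ) < (Real.sqrt (2*Real.pi))⁻¹ := inv_pos.2 sqrt2pi_pos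
    have he : Real.exp 1 ≤ 2.7182818286 := Real.exp_one_lt_d9.le
    have hE0 : (0:ℝ) < Real.exp (-T^2/2) := Real.exp_pos _
    -- from htail: (2bT) * I ≤ exp(-bT²) = e * E
    have htail' : 2 * b * T * (∫ x in Ioi T, Real.exp (-b * x^2))
        ≤ Real.exp 1 * Real.exp (-T^2/2) := by
      rw [← hexp]
      have h2bT : (0:ℝ) < 2 * b * T := by positivity
      calc 2 * b * T * (∫ x in Ioi T, Real.exp (-b * x^2))
          ≤ 2 * b * T * (Real.exp (-b * T^2) / (2 * b * T)) :=
            mul_le_mul_of_nonneg_left htail h2bT.le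
        _ = Real.exp (-b * T^2) := by field_simp
    -- goal: c*I + c*I ≤ 6/T * E
    set c := (Real.sqrt (2*Real.pi))⁻¹
    set I := ∫ x in Ioi T, Real.exp (-b * x^2)
    set E := Real.exp (-T^2/2)
    rw [div_mul_eq_mul_div, le_div_iff₀ hT0]
    -- (c*I + c*I) * T ≤ 6 * E
    clear_value b c I E
    have hIT : (0:ℝ) ≤ 2 * I * T := by positivity
    have h2IT : 2 * I * T ≤ 4 * (Real.exp 1 * E) := by
      nlinarith [mul_nonneg (by linarith : (0:ℝ) ≤ b - 1/4) hIT, htail']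
    nlinarith [mul_le_mul_of_nonneg_left h2IT hc0.le, hE0, hc, he, hI0, hT0,
      mul_le_mul hc (le_refl (Real.exp 1 * E)) (by positivity) (by norm_num)]
  -- pointwise Young-type inequality
  have L1 : ∀ x, x^2 * p x ≤ T^2 * (p x * Real.log (p x / stdGaussianDensity x)
      - p x + stdGaussianDensity x * Real.exp (x^2/T^2)) := by
    intro x
    have hy := aux_young (x^2/T^2) (hp0 x) (phi_pos x)
    have hT2 : (0:ℝ) < T^2 := by positivity
    have heq : x^2 * p x = T^2 * (p x * (x^2/T^2)) := by field_simp
    rw [heq]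
    exact mul_le_mul_of_nonneg_left hy hT2.le
  have I1 : ∫ x in A, x^2 * p x
      ≤ ∫ x in A, T^2 * (p x * Real.log (p x / stdGaussianDensity x)
          - p x + stdGaussianDensity x * Real.exp (x^2/T^2)) := by
    apply setIntegral_mono_on hmom.integrableOn
      (((hD.sub Int_p).add Int_f).const_mul (T^2)).integrableOn hA
    exact fun x _ => L1 x
  have Int_gp : Integrable (fun x => p x * Real.log (p x / stdGaussianDensity x) - p x) :=
    hD.sub Int_p
  have I2 : ∫ x in A, T^2 * (p x * Real.log (p x / stdGaussianDensity x)
          - p x + stdGaussianDensity x * Real.exp (x^2/T^2))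
      = T^2 * ((∫ x in A, p x * Real.log (p x / stdGaussianDensity x))
          - (∫ x in A, p x) + ∫ x in A, stdGaussianDensity x * Real.exp (x^2/T^2)) := by
    rw [integral_const_mul, integral_add Int_gp.integrableOn Int_f.integrableOn,
      integral_sub hD.integrableOn Int_p.integrableOn]
  have hcomp : ∀ (f : ℝ → ℝ), Integrable f → ∫ x in Aᶜ, f x = (∫ x, f x) - ∫ x in A, f x := by
    intro f hf
    rw [← integral_add_compl hA hf]
    ring
  have L2' : ∫ x in Aᶜ, (p x - stdGaussianDensity x)
      ≤ ∫ x in Aᶜ, p x * Real.log (p x / stdGaussianDensity x) := by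
    apply setIntegral_mono_on (Int_p.sub Int_phi).integrableOn hD.integrableOn hA.compl
    exact fun x _ => aux_lower (hp0 x) (phi_pos x)
  rw [integral_sub Int_p.integrableOn Int_phi.integrableOn] at L2'
  have hg := hcomp _ hD
  have hpc := hcomp _ Int_p
  have hphic := hcomp _ Int_phi
  rw [hg, hpc, hphic, hp1, phi_integral] at L2'
  have hgD : (∫ x, p x * Real.log (p x / stdGaussianDensity x)) = entDist p := rfl
  rw [hgD] at L2'
  have hphiA : 0 ≤ ∫ x in A, stdGaussianDensity x :=
    setIntegral_nonneg hA (fun x _ => (phi_pos x).le)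
  -- combine everything
  have hfinal : (∫ x in A, p x * Real.log (p x / stdGaussianDensity x))
      - (∫ x in A, p x) + (∫ x in A, stdGaussianDensity x * Real.exp (x^2/T^2))
      ≤ entDist p + 6/T * Real.exp (-T^2/2) := by linarith
  have hmul := mul_le_mul_of_nonneg_left hfinal (by positivity : (0:ℝ) ≤ T^2)
  have hring : T^2 * (entDist p + 6/T * Real.exp (-T^2/2))
      = T^2 * entDist p + 6 * T * Real.exp (-T ^ 2 / 2) := by
    field_simp
  calc ∫ x in A, x ^ 2 * p x
      ≤ T^2 * ((∫ x in A, p x * Real.log (p x / stdGaussianDensity x))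
          - (∫ x in A, p x) + ∫ x in A, stdGaussianDensity x * Real.exp (x^2/T^2)) := by
        rw [← I2]; exact I1
    _ ≤ T^2 * (entDist p + 6/T * Real.exp (-T^2/2)) := hmul
    _ = T ^ 2 * entDist p + 6 * T * Real.exp (-T ^ 2 / 2) := hring
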